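/- Let f : C → D be a conservative monoidal functor between monoidal categories, and let M be an object of C admitting a left dual and a right dual. If f(M) is invertible in D (i.e., the evaluation and coevaluation maps for f(M) are isomorphisms), then M is invertible in C. -/

import Mathlib

open CategoryTheory MonoidalCategory

namespace ConservativeReflectsAux

open Functor.LaxMonoidal Functor.OplaxMonoidal

variable {D : Type*} [Category D] [MonoidalCategory D]

/-- If `X` has a two-sided inverse, tensoring on the left with `X` is an equivalence. -/
noncomputable def tensorLeftEquivOfInv {X N : D} (e : X ⊗ N ≅ 𝟙_ D) (i : N ⊗ X ≅ 𝟙_ D) :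
    D ≌ D :=
  CategoryTheory.Equivalence.mk (tensorLeft X) (tensorLeft N)
    (NatIso.ofComponents
      (fun P => (λ_ P).symm ≪≫ whiskerRightIso i.symm P ≪≫ α_ N X P)
      (by
        intro P Q f
        dsimp [whiskerRightIso]
        rw [leftUnitor_inv_naturality_assoc, whisker_exchange_assoc,
          associator_naturality_right]
        simp))
    (NatIso.ofComponents
      (fun P => (α_ X N P).symm ≪≫ whiskerRightIso e P ≪≫ λ_ P)
      (by
        intro P Q f
        dsimp [whiskerRightIso]
        rw [associator_inv_naturality_right_assoc, whisker_exchange_assoc,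
          leftUnitor_naturality]
        simp))

theorem isEquivalence_tensorLeft_of_inv {X N : D} (e : X ⊗ N ≅ 𝟙_ D) (i : N ⊗ X ≅ 𝟙_ D) :
    (tensorLeft X).IsEquivalence :=
  (tensorLeftEquivOfInv e i).isEquivalence_functor

/-- If `(X, Y)` is an exact pairing and `X` is invertible, then the coevaluation and the
evaluation of the pairing are isomorphisms. -/
theorem isIso_coeval_eval {X Y N : D} [ExactPairing X Y]
    (e : X ⊗ N ≅ 𝟙_ D) (i : N ⊗ X ≅ 𝟙_ D) :
    IsIso (η_ X Y) ∧ IsIso (ε_ X Y) := by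
  haveI hR : (tensorLeft X).IsEquivalence := isEquivalence_tensorLeft_of_inv e i
  let adj : tensorLeft Y ⊣ tensorLeft X := tensorLeftAdjunction X Y
  haveI hL : (tensorLeft Y).IsEquivalence := adj.isEquivalence_left_of_isEquivalence_right
  constructor
  · have hu : IsIso (adj.unit.app (𝟙_ D)) := inferInstance
    have hu' : IsIso ((λ_ (𝟙_ D)).inv ≫ η_ X Y ▷ 𝟙_ D ≫ (α_ X Y (𝟙_ D)).hom) := by
      simpa [adj, tensorLeftAdjunction, tensorLeftHomEquiv] using hu
    have h1 : IsIso (η_ X Y ▷ 𝟙_ D ≫ (α_ X Y (𝟙_ D)).hom) :=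
      IsIso.of_isIso_comp_left (λ_ (𝟙_ D)).inv _
    have h2 : IsIso (η_ X Y ▷ 𝟙_ D) :=
      IsIso.of_isIso_comp_right _ (α_ X Y (𝟙_ D)).hom
    have h3 : η_ X Y = (ρ_ (𝟙_ D)).inv ≫ (η_ X Y ▷ 𝟙_ D) ≫ (ρ_ (X ⊗ Y)).hom := by
      simp
    rw [h3]
    infer_instance
  · have hc : IsIso (adj.counit.app (𝟙_ D)) := inferInstance
    have hc' : IsIso ((α_ Y X (𝟙_ D)).inv ≫ ε_ X Y ▷ 𝟙_ D ≫ (λ_ (𝟙_ D)).hom) := by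
      simpa [adj, tensorLeftAdjunction, tensorLeftHomEquiv] using hc
    have h1 : IsIso (ε_ X Y ▷ 𝟙_ D ≫ (λ_ (𝟙_ D)).hom) :=
      IsIso.of_isIso_comp_left (α_ Y X (𝟙_ D)).inv _
    have h2 : IsIso (ε_ X Y ▷ 𝟙_ D) :=
      IsIso.of_isIso_comp_right _ (λ_ (𝟙_ D)).hom
    have h3 : ε_ X Y = (ρ_ (Y ⊗ X)).inv ≫ (ε_ X Y ▷ 𝟙_ D) ≫ (ρ_ (𝟙_ D)).hom := by
      simp
    rw [h3]
    infer_instance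

variable {C : Type*} [Category C] [MonoidalCategory C]

/-- A monoidal functor sends an exact pairing to an exact pairing. -/
noncomputable def mapExactPairing (F : C ⥤ D) [F.Monoidal] (X Y : C) [ExactPairing X Y] :
    ExactPairing (F.obj X) (F.obj Y) where
  coevaluation' := ε F ≫ F.map (η_ X Y) ≫ δ F X Y
  evaluation' := μ F Y X ≫ F.map (ε_ X Y) ≫ η F
  evaluation_coevaluation' := by
    have L1 : δ F X Y ▷ F.obj X ≫ (α_ (F.obj X) (F.obj Y) (F.obj X)).hom ≫ F.obj X ◁ μ F Y X
        = μ F (X ⊗ Y) X ≫ F.map (α_ X Y X).hom ≫ δ F X (Y ⊗ X) := by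
      rw [← cancel_epi (μ F X Y ▷ F.obj X), Functor.LaxMonoidal.associativity_assoc]
      simp
    simp only [comp_whiskerRight, MonoidalCategory.whiskerLeft_comp, Category.assoc]
    rw [reassoc_of% L1, Functor.LaxMonoidal.μ_natural_left_assoc,
      Functor.OplaxMonoidal.δ_natural_right_assoc,
      ← F.map_comp_assoc, ← F.map_comp_assoc, Category.assoc,
      ExactPairing.evaluation_coevaluation]
    simp
  coevaluation_evaluation' := by
    have L2 : F.obj Y ◁ δ F X Y ≫ (α_ (F.obj Y) (F.obj X) (F.obj Y)).inv ≫ μ F Y X ▷ F.obj Y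
        = μ F Y (X ⊗ Y) ≫ F.map (α_ Y X Y).inv ≫ δ F (Y ⊗ X) Y := by
      rw [← cancel_epi (F.obj Y ◁ μ F X Y),
        reassoc_of% (Functor.LaxMonoidal.associativity_inv (F := F) Y X Y)]
      simp
    simp only [comp_whiskerRight, MonoidalCategory.whiskerLeft_comp, Category.assoc]
    rw [reassoc_of% L2, Functor.LaxMonoidal.μ_natural_right_assoc,
      Functor.OplaxMonoidal.δ_natural_left_assoc,
      ← F.map_comp_assoc, ← F.map_comp_assoc, Category.assoc,
      ExactPairing.coevaluation_evaluation]
    simp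

end ConservativeReflectsAux

/-- A conservative monoidal functor reflects invertibility of objects that
admit both a left and a right dual. -/
theorem conservative_reflects_invertible
    {C D : Type*} [Category C] [Category D]
    [MonoidalCategory C] [MonoidalCategory D]
    (F : C ⥤ D) [F.Monoidal] [F.ReflectsIsomorphisms]
    (M : C) [HasLeftDual M] [HasRightDual M]
    (h : ∃ N : D, Nonempty (F.obj M ⊗ N ≅ 𝟙_ D) ∧ Nonempty (N ⊗ F.obj M ≅ 𝟙_ D)) :
    ∃ N : C, Nonempty (M ⊗ N ≅ 𝟙_ C) ∧ Nonempty (N ⊗ M ≅ 𝟙_ C) := by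
  obtain ⟨N, ⟨e⟩, ⟨i⟩⟩ := h
  open Functor.LaxMonoidal Functor.OplaxMonoidal in
  letI hp : ExactPairing (F.obj M) (F.obj (Mᘁ)) :=
    ConservativeReflectsAux.mapExactPairing F M (Mᘁ)
  obtain ⟨hη, hε⟩ := ConservativeReflectsAux.isIso_coeval_eval (X := F.obj M)
    (Y := F.obj (Mᘁ)) e i
  -- the coevaluation and evaluation of `hp` are definitionally the conjugated images
  have hη' : IsIso (Functor.LaxMonoidal.ε F ≫ F.map (η_ M (Mᘁ)) ≫
      Functor.OplaxMonoidal.δ F M (Mᘁ)) := by exact hη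
  have hε' : IsIso (Functor.LaxMonoidal.μ F (Mᘁ) M ≫ F.map (ε_ M (Mᘁ)) ≫
      Functor.OplaxMonoidal.η F) := by exact hε
  have hη'' : IsIso (F.map (η_ M (Mᘁ))) := by
    have h1 : IsIso (F.map (η_ M (Mᘁ)) ≫ Functor.OplaxMonoidal.δ F M (Mᘁ)) :=
      IsIso.of_isIso_comp_left (Functor.LaxMonoidal.ε F) _
    exact IsIso.of_isIso_comp_right _ (Functor.OplaxMonoidal.δ F M (Mᘁ))
  have hε'' : IsIso (F.map (ε_ M (Mᘁ))) := by
    have h1 : IsIso (F.map (ε_ M (Mᘁ)) ≫ Functor.OplaxMonoidal.η F) :=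
      IsIso.of_isIso_comp_left (Functor.LaxMonoidal.μ F (Mᘁ) M) _
    exact IsIso.of_isIso_comp_right _ (Functor.OplaxMonoidal.η F)
  have h1 : IsIso (η_ M (Mᘁ)) := isIso_of_reflects_iso _ F
  have h2 : IsIso (ε_ M (Mᘁ)) := isIso_of_reflects_iso _ F
  exact ⟨Mᘁ, ⟨(asIso (η_ M (Mᘁ))).symm⟩, ⟨asIso (ε_ M (Mᘁ))⟩⟩
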